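/- Let n ≥ 2 and let B_v be the closed unit ball of the variation norm ‖x‖_v := max_i x_i − min_i x_i on V_0 := {x ∈ ℝⁿ : x_n = 0}. Then the illumination number of B_v equals the binomial coefficient C(n, ⌈n/2⌉): the minimum cardinality of a finite set S ⊆ V_0 such that for every z ∈ V_0 with ‖z‖_v = 1 there exists v ∈ S and ε > 0 with ‖z + λv‖_v < 1 for all 0 < λ < ε, is exactly C(n, ⌈n/2⌉). -/

import Mathlib

/-- The variation seminorm `max_i x_i - min_i x_i` on `ℝⁿ` (a norm on `V0`). -/
noncomputable def vnorm (n : ℕ) (x : Fin n → ℝ) : ℝ := (⨆ i, x i) - (⨅ i, x i)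

/-- The norm `‖x‖_H = max(max_i x_i, 0) - min(min_i x_i, 0)` on `ℝᵐ`. -/
noncomputable def Hnorm (m : ℕ) (x : Fin m → ℝ) : ℝ :=
  max (⨆ i, x i) 0 - min (⨅ i, x i) 0

/-- Hilbert's (projective) metric on the open positive cone. -/
noncomputable def dH (n : ℕ) (x y : Fin n → ℝ) : ℝ :=
  Real.log (⨆ i, x i / y i) - Real.log (⨅ i, x i / y i)

/-- `V0 = {x ∈ ℝⁿ : x_n = 0}` (the last coordinate vanishes). -/
def V0 (n : ℕ) : Set (Fin n → ℝ) := {x | ∀ i : Fin n, (i : ℕ) = n - 1 → x i = 0}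

/-- `v` illuminates `z` (a point of the unit sphere of the norm `nrm`). -/
def illum (m : ℕ) (nrm : (Fin m → ℝ) → ℝ) (v z : Fin m → ℝ) : Prop :=
  ∃ ε > 0, ∀ l : ℝ, 0 < l → l < ε → nrm (z + l • v) < 1

section analytic

lemma exists_sup_eq {n : ℕ} (hn : 0 < n) (x : Fin n → ℝ) :
    ∃ i, (⨆ j, x j) = x i ∧ ∀ j, x j ≤ x i := by
  haveI : Nonempty (Fin n) := ⟨⟨0, hn⟩⟩
  obtain ⟨i, hi⟩ := Finite.exists_max x
  exact ⟨i, le_antisymm (ciSup_le hi) (le_ciSup (Set.finite_range x).bddAbove i), hi⟩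

lemma exists_inf_eq {n : ℕ} (hn : 0 < n) (x : Fin n → ℝ) :
    ∃ i, (⨅ j, x j) = x i ∧ ∀ j, x i ≤ x j := by
  haveI : Nonempty (Fin n) := ⟨⟨0, hn⟩⟩
  obtain ⟨i, hi⟩ := Finite.exists_min x
  exact ⟨i, le_antisymm (ciInf_le (Set.finite_range x).bddBelow i) (le_ciInf hi), hi⟩


lemma sub_le_vnorm {n : ℕ} (hn : 0 < n) (x : Fin n → ℝ) (i j : Fin n) :
    x i - x j ≤ vnorm n x := by
  haveI : Nonempty (Fin n) := ⟨⟨0, hn⟩⟩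
  exact sub_le_sub (le_ciSup (Set.finite_range x).bddAbove i)
    (ciInf_le (Set.finite_range x).bddBelow j)

/-- Necessity: an illuminating direction strictly decreases on (argmax, argmin) pairs. -/
lemma illum_necc {n : ℕ} (hn : 0 < n) {z v : Fin n → ℝ} (hz : vnorm n z = 1)
    (h : illum n (vnorm n) v z) {i j : Fin n}
    (hi : z i = ⨆ k, z k) (hj : z j = ⨅ k, z k) : v i < v j := by
  obtain ⟨ε, hε, H⟩ := h
  have h1 : vnorm n (z + (ε/2) • v) < 1 := H (ε/2) (by linarith) (by linarith)
  have h2 : (z i + (ε/2) * v i) - (z j + (ε/2) * v j) ≤ vnorm n (z + (ε/2) • v) := by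
    have := sub_le_vnorm hn (z + (ε/2) • v) i j
    simpa using this
  have h3 : z i - z j = 1 := by rw [hi, hj]; exact hz
  nlinarith

lemma vnorm_def (n : ℕ) (x : Fin n → ℝ) : vnorm n x = (⨆ i, x i) - (⨅ i, x i) := rfl

/-- Sufficiency: if `v` strictly decreases from every argmax to every argmin of `z`,
then `v` illuminates `z`. -/
lemma illum_suff {n : ℕ} (hn : 0 < n) {z v : Fin n → ℝ} (hz : vnorm n z = 1)
    (h : ∀ i j : Fin n, z i = (⨆ k, z k) → z j = (⨅ k, z k) → v i < v j) :
    illum n (vnorm n) v z := by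
  haveI : Nonempty (Fin n) := ⟨⟨0, hn⟩⟩
  classical
  set M := ⨆ k, z k with hM
  set m := ⨅ k, z k with hm
  have hMm : M - m = 1 := hz
  obtain ⟨i0, hi0, hi0max⟩ := exists_sup_eq hn z
  obtain ⟨j0, hj0, hj0min⟩ := exists_inf_eq hn z
  -- the argmax/argmin finsets
  set Mx : Finset (Fin n) := Finset.univ.filter (fun i => z i = M) with hMx
  set Mn : Finset (Fin n) := Finset.univ.filter (fun i => z i = m) with hMn
  have hMxne : Mx.Nonempty := ⟨i0, by simp [hMx, hi0.symm]; exact hM.symm⟩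
  have hMnne : Mn.Nonempty := ⟨j0, by simp [hMn, hj0.symm]; exact hm.symm⟩
  set a : ℝ := Mx.sup' hMxne v with ha
  set b : ℝ := Mn.inf' hMnne v with hb
  have hab : a < b := by
    obtain ⟨i1, hi1, hi1e⟩ := Finset.exists_mem_eq_sup' hMxne v
    obtain ⟨j1, hj1, hj1e⟩ := Finset.exists_mem_eq_inf' hMnne v
    rw [ha, hb, hi1e, hj1e]
    exact h i1 j1 (by simpa [hMx] using hi1) (by simpa [hMn] using hj1)
  -- non-extreme coordinates
  set NMx : Finset (Fin n) := Finset.univ.filter (fun i => z i ≠ M) with hNMx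
  set NMn : Finset (Fin n) := Finset.univ.filter (fun i => z i ≠ m) with hNMn
  have hj0m : z j0 = m := (hm.trans hj0).symm
  have hi0M : z i0 = M := (hM.trans hi0).symm
  have hNMxne : NMx.Nonempty := ⟨j0, by
    simp only [hNMx, Finset.mem_filter, Finset.mem_univ, true_and]
    rw [hj0m]; intro hc; rw [hc] at hMm; linarith⟩
  have hNMnne : NMn.Nonempty := ⟨i0, by
    simp only [hNMn, Finset.mem_filter, Finset.mem_univ, true_and]
    rw [hi0M]; intro hc; rw [← hc] at hMm; linarith⟩
  set δ1 : ℝ := NMx.inf' hNMxne (fun i => M - z i) with hδ1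
  set δ2 : ℝ := NMn.inf' hNMnne (fun i => z i - m) with hδ2
  have hδ1pos : 0 < δ1 := by
    rw [hδ1, Finset.lt_inf'_iff]
    intro i hi
    simp only [hNMx, Finset.mem_filter, Finset.mem_univ, true_and] at hi
    have := hi0max i; rw [← hi0] at this
    cases lt_or_eq_of_le this with
    | inl hlt => linarith
    | inr he => exact absurd he hi
  have hδ2pos : 0 < δ2 := by
    rw [hδ2, Finset.lt_inf'_iff]
    intro i hi
    simp only [hNMn, Finset.mem_filter, Finset.mem_univ, true_and] at hi
    have := hj0min i; rw [← hj0] at this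
    cases lt_or_eq_of_le this with
    | inl hlt => linarith
    | inr he => exact absurd he.symm hi
  set C : ℝ := 1 + Finset.univ.sup' Finset.univ_nonempty (fun i => |v i|) with hC
  have hCb : ∀ i, |v i| ≤ C - 1 := fun i => by
    rw [hC, add_sub_cancel_left]; exact Finset.le_sup' (fun i => |v i|) (Finset.mem_univ i)
  have hCpos : 0 < C := by
    have := hCb i0
    have := abs_nonneg (v i0)
    linarith
  have haC : |a| ≤ C := by
    obtain ⟨i1, _, hi1e⟩ := Finset.exists_mem_eq_sup' hMxne v
    rw [ha, hi1e]; have := hCb i1; linarith [abs_nonneg (v i1)]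
  have hbC : |b| ≤ C := by
    obtain ⟨j1, _, hj1e⟩ := Finset.exists_mem_eq_inf' hMnne v
    rw [hb, hj1e]; have := hCb j1; linarith [abs_nonneg (v j1)]
  refine ⟨min δ1 δ2 / (2 * C), by positivity, fun l hl hlε => ?_⟩
  have hl1 : l * (2 * C) < δ1 := by
    have : l * (2*C) < (min δ1 δ2 / (2*C)) * (2*C) := by
      apply mul_lt_mul_of_pos_right hlε; positivity
    rw [div_mul_cancel₀] at this
    · exact lt_of_lt_of_le this (min_le_left _ _)
    · positivity
  have hl2 : l * (2 * C) < δ2 := by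
    have : l * (2*C) < (min δ1 δ2 / (2*C)) * (2*C) := by
      apply mul_lt_mul_of_pos_right hlε; positivity
    rw [div_mul_cancel₀] at this
    · exact lt_of_lt_of_le this (min_le_right _ _)
    · positivity
  have hup : ∀ i, z i + l * v i ≤ M + l * a := by
    intro i
    by_cases hi : z i = M
    · have hvi : v i ≤ a := Finset.le_sup' v (by simp [hMx, hi])
      have := mul_le_mul_of_nonneg_left hvi hl.le
      rw [hi]; linarith
    · have hzi : δ1 ≤ M - z i := Finset.inf'_le _ (by simp [hNMx, hi])
      have h1 : v i ≤ C - 1 := (abs_le.mp (hCb i)).2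
      have h2 : -C ≤ a := (abs_le.mp haC).1
      have p1 : l * v i ≤ l * (C - 1) := mul_le_mul_of_nonneg_left h1 hl.le
      have p2 : l * (-C) ≤ l * a := mul_le_mul_of_nonneg_left h2 hl.le
      have e1 : l * (2 * C) = l * (C - 1) - l * (-C) + l := by ring
      linarith
  have hdn : ∀ i, m + l * b ≤ z i + l * v i := by
    intro i
    by_cases hi : z i = m
    · have hvi : b ≤ v i := Finset.inf'_le v (by simp [hMn, hi])
      have := mul_le_mul_of_nonneg_left hvi hl.le
      rw [hi]; linarith
    · have hzi : δ2 ≤ z i - m := Finset.inf'_le _ (by simp [hNMn, hi])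
      have h1 : -(C - 1) ≤ v i := (abs_le.mp (hCb i)).1
      have h2 : b ≤ C := (abs_le.mp hbC).2
      have p1 : l * (-(C - 1)) ≤ l * v i := mul_le_mul_of_nonneg_left h1 hl.le
      have p2 : l * b ≤ l * C := mul_le_mul_of_nonneg_left h2 hl.le
      have e1 : l * (2 * C) = l * C - l * (-(C - 1)) + l := by ring
      linarith
  have hs : (⨆ i, (z + l • v) i) ≤ M + l * a := by
    apply ciSup_le
    intro i; simpa using hup i
  have hif : m + l * b ≤ ⨅ i, (z + l • v) i := by
    apply le_ciInf
    intro i; simpa using hdn i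
  have h8 : (⨆ i, (z + l • v) i) - (⨅ i, (z + l • v) i) ≤ (M + l * a) - (m + l * b) :=
    sub_le_sub hs hif
  rw [vnorm_def]
  have h10 : l * (a - b) < 0 := mul_neg_of_pos_of_neg hl (by linarith)
  linarith

end analytic

section chains
open Finset


def cutSet (A B : Finset ℕ) (s : ℕ) : Finset ℕ := A ∪ (B \ A).filter (· < s)

lemma cutSet_zero (A B : Finset ℕ) : cutSet A B 0 = A := by simp [cutSet]

lemma cutSet_self (A : Finset ℕ) (s : ℕ) : cutSet A A s = A := by simp [cutSet]

lemma cutSet_subset (A B : Finset ℕ) (hAB : A ⊆ B) (s : ℕ) : cutSet A B s ⊆ B := by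
  intro x hx
  rcases Finset.mem_union.mp hx with h | h
  · exact hAB h
  · exact (Finset.mem_sdiff.mp (Finset.mem_filter.mp h).1).1

lemma cutSet_top (A B : Finset ℕ) (hAB : A ⊆ B) {n s : ℕ} (hB : B ⊆ Finset.range n)
    (hs : n ≤ s) : cutSet A B s = B := by
  apply le_antisymm (cutSet_subset A B hAB s)
  intro x hx
  by_cases hxA : x ∈ A
  · exact Finset.mem_union_left _ hxA
  · refine Finset.mem_union_right _ (Finset.mem_filter.mpr ⟨Finset.mem_sdiff.mpr ⟨hx, hxA⟩, ?_⟩)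
    have := Finset.mem_range.mp (hB hx)
    simpa using lt_of_lt_of_le this hs

/-- max of the difference `B \ A`. -/
def mdiff (A B : Finset ℕ) : ℕ := (B \ A).sup id

lemma mdiff_spec {A B : Finset ℕ} (hne : (B \ A).Nonempty) :
    mdiff A B ∈ B \ A ∧ ∀ x ∈ B \ A, x ≤ mdiff A B := by
  have he : mdiff A B = (B \ A).max' hne := by
    rw [mdiff, Finset.max', Finset.sup'_eq_sup]
  constructor
  · rw [he]; exact Finset.max'_mem _ _
  · intro x hx; rw [he]; exact Finset.le_max' _ _ hx

section step
variable {n : ℕ} {A B : Finset ℕ}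

/-- K1a -/
lemma cut_f1_low (hB : B ⊆ Finset.range n) {s : ℕ} (hs : s ≤ n) :
    cutSet A (insert n B) s = cutSet A B s := by
  unfold cutSet
  congr 1
  have : insert n B \ A = insert n (B \ A) ∨ insert n B \ A = B \ A := by
    by_cases hnA : n ∈ A
    · right; ext x
      simp only [Finset.mem_sdiff, Finset.mem_insert]
      constructor
      · rintro ⟨hx | hx, hxA⟩
        · exact absurd (hx ▸ hnA) hxA
        · exact ⟨hx, hxA⟩
      · rintro ⟨hx, hxA⟩; exact ⟨Or.inr hx, hxA⟩
    · left; ext x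
      simp only [Finset.mem_sdiff, Finset.mem_insert]
      constructor
      · rintro ⟨hx | hx, hxA⟩
        · exact Or.inl hx
        · exact Or.inr ⟨hx, hxA⟩
      · rintro (hx | ⟨hx, hxA⟩)
        · exact ⟨Or.inl hx, hx ▸ hnA⟩
        · exact ⟨Or.inr hx, hxA⟩
  rcases this with h | h
  · rw [h]
    ext x
    simp only [Finset.mem_filter, Finset.mem_insert]
    constructor
    · rintro ⟨hx | hx, hlt⟩
      · omega
      · exact ⟨hx, hlt⟩
    · rintro ⟨hx, hlt⟩; exact ⟨Or.inr hx, hlt⟩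
  · rw [h]

/-- K1b -/
lemma cut_f1_high (hAB : A ⊆ B) (hB : B ⊆ Finset.range n) {s : ℕ} (hs : n + 1 ≤ s) :
    cutSet A (insert n B) s = insert n B := by
  apply cutSet_top _ _ (hAB.trans (Finset.subset_insert _ _)) _ hs
  intro x hx
  rcases Finset.mem_insert.mp hx with h | h
  · simp [h]
  · exact Finset.mem_range.mpr (by have := Finset.mem_range.mp (hB h); omega)

/-- K2 -/
lemma cut_f2 (hAB : A ⊆ B) (hB : B ⊆ Finset.range n) (hne : (B \ A).Nonempty) (s : ℕ) :
    cutSet (insert n A) (insert n (B.erase (mdiff A B))) s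
      = insert n (cutSet A B (min s (mdiff A B))) := by
  obtain ⟨hm_mem, hm_max⟩ := mdiff_spec hne
  obtain ⟨hmB, hmA⟩ := Finset.mem_sdiff.mp hm_mem
  have hnB : n ∉ B := fun h => by simpa using Finset.mem_range.mp (hB h)
  have hnA : n ∉ A := fun h => hnB (hAB h)
  ext x
  by_cases hx : x = n
  · subst hx
    simp only [cutSet, Finset.mem_union, Finset.mem_insert, Finset.mem_filter,
      Finset.mem_sdiff, Finset.mem_erase]
    constructor
    · intro _; left; trivial
    · intro _; left; left; trivial
  · simp only [cutSet, Finset.mem_union, Finset.mem_insert, Finset.mem_filter,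
      Finset.mem_sdiff, Finset.mem_erase]
    constructor
    · rintro ((h | h) | ⟨⟨(h | ⟨hxm, hxB⟩), hni⟩, hlt⟩)
      · exact absurd h hx
      · right; left; exact h
      · exact absurd h hx
      · have hxA : x ∉ A := fun hc => hni (Or.inr hc)
        have := hm_max x (Finset.mem_sdiff.mpr ⟨hxB, hxA⟩)
        right; right
        exact ⟨⟨hxB, hxA⟩, by omega⟩
    · rintro (h | h | ⟨⟨hxB, hxA⟩, hlt⟩)
      · exact absurd h hx
      · left; right; exact h
      · right
        have hxm : x ≠ mdiff A B := by omega
        exact ⟨⟨Or.inr ⟨hxm, hxB⟩, fun hc => by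
          rcases hc with hc | hc
          · exact hx hc
          · exact hxA hc⟩, by omega⟩
end step

def goodFam (n : ℕ) (P : Finset (Finset ℕ × Finset ℕ)) : Prop :=
  (∀ p ∈ P, p.1 ⊆ p.2 ∧ p.2 ⊆ Finset.range n ∧ p.1.card + p.2.card = n) ∧
  (∀ D ⊆ Finset.range n, ∃ p ∈ P, ∃ s ≤ n, D = cutSet p.1 p.2 s) ∧
  (∀ p ∈ P, ∀ q ∈ P, ∀ s t : ℕ, cutSet p.1 p.2 s = cutSet q.1 q.2 t → p = q)

lemma goodFam_exists : ∀ n : ℕ, ∃ P, goodFam n P := by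
  intro n
  induction n with
  | zero =>
    refine ⟨{(∅, ∅)}, ⟨?_, ?_, ?_⟩⟩
    · intro p hp; rw [Finset.mem_singleton] at hp; subst hp; simp
    · intro D hD
      have : D = ∅ := by simpa using Finset.subset_empty.mp (by simpa using hD)
      exact ⟨(∅, ∅), Finset.mem_singleton_self _, 0, le_refl _, by simp [this, cutSet]⟩
    · intro p hp q hq _ _ _
      rw [Finset.mem_singleton] at hp hq; rw [hp, hq]
  | succ n ih =>
    classical
    obtain ⟨P, hpair, hcov, hpart⟩ := ih
    set f₁ : Finset ℕ × Finset ℕ → Finset ℕ × Finset ℕ := fun p => (p.1, insert n p.2) with hf₁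
    set f₂ : Finset ℕ × Finset ℕ → Finset ℕ × Finset ℕ :=
      fun p => (insert n p.1, insert n (p.2.erase (mdiff p.1 p.2))) with hf₂
    -- keys
    have hnotB : ∀ p ∈ P, n ∉ p.2 := fun p hp hc => by
      simpa using Finset.mem_range.mp ((hpair p hp).2.1 hc)
    have hnotA : ∀ p ∈ P, n ∉ p.1 := fun p hp hc => hnotB p hp ((hpair p hp).1 hc)
    have hncut : ∀ p ∈ P, ∀ s, n ∉ cutSet p.1 p.2 s := fun p hp s hc =>
      hnotB p hp (cutSet_subset _ _ (hpair p hp).1 s hc)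
    have hsdne : ∀ p ∈ P, p.1 ≠ p.2 → (p.2 \ p.1).Nonempty := by
      intro p hp hne
      rw [Finset.sdiff_nonempty]
      exact fun hsub => hne (le_antisymm (hpair p hp).1 hsub)
    have key1 : ∀ p ∈ P, ∀ s, (cutSet (f₁ p).1 (f₁ p).2 s).erase n
        = cutSet p.1 p.2 (min s n) := by
      intro p hp s
      obtain ⟨hAB, hBr, _⟩ := hpair p hp
      rcases le_or_gt s n with h | h
      · rw [show (f₁ p).1 = p.1 from rfl, show (f₁ p).2 = insert n p.2 from rfl,
          cut_f1_low hBr h, min_eq_left h]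
        exact Finset.erase_eq_of_notMem (hncut p hp s)
      · rw [show (f₁ p).1 = p.1 from rfl, show (f₁ p).2 = insert n p.2 from rfl,
          cut_f1_high hAB hBr h, min_eq_right h.le,
          cutSet_top p.1 p.2 hAB hBr (le_refl n)]
        exact Finset.erase_insert (hnotB p hp)
    have key2 : ∀ p ∈ P, p.1 ≠ p.2 → ∀ s, (cutSet (f₂ p).1 (f₂ p).2 s).erase n
        = cutSet p.1 p.2 (min s (mdiff p.1 p.2)) := by
      intro p hp hne s
      obtain ⟨hAB, hBr, _⟩ := hpair p hp
      rw [show (f₂ p).1 = insert n p.1 from rfl,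
        show (f₂ p).2 = insert n (p.2.erase (mdiff p.1 p.2)) from rfl,
        cut_f2 hAB hBr (hsdne p hp hne) s]
      exact Finset.erase_insert (hncut p hp _)
    have key3 : ∀ p ∈ P, p.1 ≠ p.2 → ∀ s, n ∈ cutSet (f₂ p).1 (f₂ p).2 s := by
      intro p hp hne s
      obtain ⟨hAB, hBr, _⟩ := hpair p hp
      rw [show (f₂ p).1 = insert n p.1 from rfl,
        show (f₂ p).2 = insert n (p.2.erase (mdiff p.1 p.2)) from rfl,
        cut_f2 hAB hBr (hsdne p hp hne) s]
      exact Finset.mem_insert_self _ _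
    have keym : ∀ p ∈ P, ∀ r ≤ mdiff p.1 p.2, p.1 ≠ p.2 → mdiff p.1 p.2 ∉ cutSet p.1 p.2 r := by
      intro p hp r hr hne hc
      obtain ⟨hm_mem, _⟩ := mdiff_spec (hsdne p hp hne)
      obtain ⟨_, hmA⟩ := Finset.mem_sdiff.mp hm_mem
      rcases Finset.mem_union.mp hc with h | h
      · exact hmA h
      · have := (Finset.mem_filter.mp h).2
        omega
    have mixed : ∀ p ∈ P, ∀ q ∈ P, q.1 ≠ q.2 → ∀ s t : ℕ,
        cutSet (f₁ p).1 (f₁ p).2 s = cutSet (f₂ q).1 (f₂ q).2 t → False := by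
      intro p hp q hq hne s t hE
      have hpq : p = q := by
        apply hpart p hp q hq (min s n) (min t (mdiff q.1 q.2))
        rw [← key1 p hp s, ← key2 q hq hne t, hE]
      subst hpq
      have hnE : n ∈ cutSet (f₁ p).1 (f₁ p).2 s := hE ▸ key3 p hp hne t
      obtain ⟨hAB, hBr, _⟩ := hpair p hp
      have hns : n < s := by
        rcases Finset.mem_union.mp hnE with h | h
        · exact absurd h (hnotA p hp)
        · exact (Finset.mem_filter.mp h).2
      have hEe := congrArg (fun X => Finset.erase X n) hE
      rw [key1 p hp s, key2 p hp hne t, min_eq_right hns.le,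
        cutSet_top p.1 p.2 hAB hBr (le_refl n)] at hEe
      have hmB : mdiff p.1 p.2 ∈ p.2 :=
        (Finset.mem_sdiff.mp (mdiff_spec (hsdne p hp hne)).1).1
      have hmB2 : mdiff p.1 p.2 ∈ cutSet p.1 p.2 (min t (mdiff p.1 p.2)) := by
        rw [← hEe]; exact hmB
      exact keym p hp _ (min_le_right _ _) hne hmB2
    refine ⟨P.image f₁ ∪ (P.filter (fun p => p.1 ≠ p.2)).image f₂, ?_, ?_, ?_⟩
    · -- pair invariants
      intro p' hp'
      rcases Finset.mem_union.mp hp' with h | h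
      · obtain ⟨p, hp, rfl⟩ := Finset.mem_image.mp h
        obtain ⟨hAB, hBr, hc⟩ := hpair p hp
        refine ⟨hAB.trans (Finset.subset_insert _ _), ?_, ?_⟩
        · intro x hx
          rcases Finset.mem_insert.mp hx with h' | h'
          · simp [h']
          · exact Finset.mem_range.mpr (by have := Finset.mem_range.mp (hBr h'); omega)
        · show p.1.card + (insert n p.2).card = n + 1
          rw [Finset.card_insert_of_notMem (hnotB p hp)]; omega
      · obtain ⟨p, hpf, rfl⟩ := Finset.mem_image.mp h
        obtain ⟨hp, hne⟩ := Finset.mem_filter.mp hpf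
        obtain ⟨hAB, hBr, hc⟩ := hpair p hp
        obtain ⟨hm_mem, hm_max⟩ := mdiff_spec (hsdne p hp hne)
        obtain ⟨hmB, hmA⟩ := Finset.mem_sdiff.mp hm_mem
        refine ⟨?_, ?_, ?_⟩
        · apply Finset.insert_subset_insert
          intro x hx
          exact Finset.mem_erase.mpr ⟨fun he => hmA (he ▸ hx), hAB hx⟩
        · intro x hx
          rcases Finset.mem_insert.mp hx with h' | h'
          · simp [h']
          · have := Finset.mem_range.mp (hBr (Finset.mem_erase.mp h').2)
            exact Finset.mem_range.mpr (by omega)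
        · show (insert n p.1).card + (insert n (p.2.erase (mdiff p.1 p.2))).card = n + 1
          rw [Finset.card_insert_of_notMem (hnotA p hp),
            Finset.card_insert_of_notMem (fun hc' => hnotB p hp (Finset.mem_erase.mp hc').2),
            Finset.card_erase_of_mem hmB]
          have : 1 ≤ p.2.card := Finset.card_pos.mpr ⟨_, hmB⟩
          omega
    · -- coverage
      intro D hD
      by_cases hnD : n ∈ D
      · have hD0 : D.erase n ⊆ Finset.range n := by
          intro x hx
          obtain ⟨hxn, hxD⟩ := Finset.mem_erase.mp hx
          have := Finset.mem_range.mp (hD hxD)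
          exact Finset.mem_range.mpr (by omega)
        obtain ⟨p, hp, s, hs, hDs⟩ := hcov (D.erase n) hD0
        obtain ⟨hAB, hBr, _⟩ := hpair p hp
        by_cases hDB : D.erase n = p.2
        · refine ⟨f₁ p, Finset.mem_union_left _ (Finset.mem_image_of_mem f₁ hp),
            n + 1, le_refl _, ?_⟩
          rw [show (f₁ p).1 = p.1 from rfl, show (f₁ p).2 = insert n p.2 from rfl,
            cut_f1_high hAB hBr (le_refl _), ← hDB]
          exact (Finset.insert_erase hnD).symm
        · have hne : p.1 ≠ p.2 := by
            intro he
            rw [hDs, he, cutSet_self] at hDB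
            exact hDB rfl
          have hnlt : ¬ (mdiff p.1 p.2 < s) := by
            intro hlt
            apply hDB
            rw [hDs]
            apply le_antisymm (cutSet_subset _ _ hAB s)
            intro x hx
            by_cases hxA : x ∈ p.1
            · exact Finset.mem_union_left _ hxA
            · refine Finset.mem_union_right _ (Finset.mem_filter.mpr
                ⟨Finset.mem_sdiff.mpr ⟨hx, hxA⟩, ?_⟩)
              have := (mdiff_spec (hsdne p hp hne)).2 x (Finset.mem_sdiff.mpr ⟨hx, hxA⟩)
              omega
          refine ⟨f₂ p, Finset.mem_union_right _ (Finset.mem_image_of_mem f₂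
            (Finset.mem_filter.mpr ⟨hp, hne⟩)), s, by omega, ?_⟩
          rw [show (f₂ p).1 = insert n p.1 from rfl,
            show (f₂ p).2 = insert n (p.2.erase (mdiff p.1 p.2)) from rfl,
            cut_f2 hAB hBr (hsdne p hp hne) s, min_eq_left (by omega), ← hDs]
          exact (Finset.insert_erase hnD).symm
      · have hD' : D ⊆ Finset.range n := by
          intro x hx
          have := Finset.mem_range.mp (hD hx)
          have hxn : x ≠ n := fun he => hnD (he ▸ hx)
          exact Finset.mem_range.mpr (by omega)
        obtain ⟨p, hp, s, hs, hDs⟩ := hcov D hD'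
        refine ⟨f₁ p, Finset.mem_union_left _ (Finset.mem_image_of_mem f₁ hp), s, by omega, ?_⟩
        rw [show (f₁ p).1 = p.1 from rfl, show (f₁ p).2 = insert n p.2 from rfl,
          cut_f1_low (hpair p hp).2.1 hs]
        exact hDs
    · -- partition
      intro p' hp' q' hq' s t hE
      rcases Finset.mem_union.mp hp' with h1 | h1 <;> rcases Finset.mem_union.mp hq' with h2 | h2
      · obtain ⟨p, hp, rfl⟩ := Finset.mem_image.mp h1
        obtain ⟨q, hq, rfl⟩ := Finset.mem_image.mp h2
        have : p = q := by
          apply hpart p hp q hq (min s n) (min t n)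
          rw [← key1 p hp s, ← key1 q hq t, hE]
        rw [this]
      · obtain ⟨p, hp, rfl⟩ := Finset.mem_image.mp h1
        obtain ⟨q, hqf, rfl⟩ := Finset.mem_image.mp h2
        obtain ⟨hq, hne⟩ := Finset.mem_filter.mp hqf
        exact absurd hE (fun hE => absurd (mixed p hp q hq hne s t hE) (fun h => h))
      · obtain ⟨p, hpf, rfl⟩ := Finset.mem_image.mp h1
        obtain ⟨q, hq, rfl⟩ := Finset.mem_image.mp h2
        obtain ⟨hp, hne⟩ := Finset.mem_filter.mp hpf
        exact absurd (mixed q hq p hp hne t s hE.symm) (fun h => h)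
      · obtain ⟨p, hpf, rfl⟩ := Finset.mem_image.mp h1
        obtain ⟨q, hqf, rfl⟩ := Finset.mem_image.mp h2
        obtain ⟨hp, hnep⟩ := Finset.mem_filter.mp hpf
        obtain ⟨hq, hneq⟩ := Finset.mem_filter.mp hqf
        have : p = q := by
          apply hpart p hp q hq (min s (mdiff p.1 p.2)) (min t (mdiff q.1 q.2))
          rw [← key2 p hp hnep s, ← key2 q hq hneq t, hE]
        rw [this]

lemma cutSet_mono (A B : Finset ℕ) {s t : ℕ} (hst : s ≤ t) :
    cutSet A B s ⊆ cutSet A B t := by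
  apply Finset.union_subset_union_right
  intro x hx
  obtain ⟨h1, h2⟩ := Finset.mem_filter.mp hx
  exact Finset.mem_filter.mpr ⟨h1, by omega⟩

lemma cutSet_min {n : ℕ} (A B : Finset ℕ) (hB : B ⊆ Finset.range n) (s : ℕ) :
    cutSet A B s = cutSet A B (min s n) := by
  unfold cutSet
  congr 1
  apply Finset.filter_congr
  intro x hx
  have := Finset.mem_range.mp (hB (Finset.mem_sdiff.mp hx).1)
  constructor <;> (intro; omega)

lemma cutSet_card_step (A B : Finset ℕ) (s : ℕ) :
    (cutSet A B (s+1)).card ≤ (cutSet A B s).card + 1 := by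
  have h : cutSet A B (s+1) ⊆ insert s (cutSet A B s) := by
    intro x hx
    rcases Finset.mem_union.mp hx with h | h
    · exact Finset.mem_insert_of_mem (Finset.mem_union_left _ h)
    · obtain ⟨h1, h2⟩ := Finset.mem_filter.mp h
      rcases Nat.lt_succ_iff_lt_or_eq.mp h2 with h3 | h3
      · exact Finset.mem_insert_of_mem (Finset.mem_union_right _
          (Finset.mem_filter.mpr ⟨h1, h3⟩))
      · simp [h3]
  calc (cutSet A B (s+1)).card ≤ (insert s (cutSet A B s)).card := Finset.card_le_card h
    _ ≤ (cutSet A B s).card + 1 := Finset.card_insert_le _ _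

/-- Discrete intermediate value theorem. -/
lemma discrete_ivt (g : ℕ → ℕ) (hstep : ∀ s, g (s+1) ≤ g s + 1) (t : ℕ) :
    ∀ N, g 0 ≤ t → t ≤ g N → ∃ s ≤ N, g s = t := by
  intro N
  induction N with
  | zero => intro h1 h2; exact ⟨0, le_refl _, le_antisymm (by omega) (by omega)⟩
  | succ N ih =>
    intro h1 h2
    by_cases h : t ≤ g N
    · obtain ⟨s, hs1, hs2⟩ := ih h1 h
      exact ⟨s, by omega, hs2⟩
    · exact ⟨N+1, le_refl _, by have := hstep N; omega⟩

open scoped Classical in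
noncomputable def midcut (n : ℕ) (p : Finset ℕ × Finset ℕ) : Finset ℕ :=
  if h : ∃ s, (cutSet p.1 p.2 s).card = n/2 then cutSet p.1 p.2 h.choose else ∅

lemma goodFam_card {n : ℕ} {P : Finset (Finset ℕ × Finset ℕ)} (h : goodFam n P) :
    P.card = n.choose ((n+1)/2) := by
  classical
  obtain ⟨hpair, hcov, hpart⟩ := h
  -- for members, midcut has the right cardinality
  have hmid : ∀ p ∈ P, ∃ s, midcut n p = cutSet p.1 p.2 s ∧ (midcut n p).card = n/2 := by
    intro p hp
    obtain ⟨hAB, hBr, hcard⟩ := hpair p hp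
    have hex : ∃ s, (cutSet p.1 p.2 s).card = n/2 := by
      have h0 : (cutSet p.1 p.2 0).card = p.1.card := by rw [cutSet_zero]
      have hn : (cutSet p.1 p.2 n).card = p.2.card := by
        rw [cutSet_top p.1 p.2 hAB hBr (le_refl n)]
      have hA2 : p.1.card ≤ n/2 := by
        have : p.1.card ≤ p.2.card := Finset.card_le_card hAB
        omega
      have hB2 : n/2 ≤ p.2.card := by
        have : p.1.card ≤ p.2.card := Finset.card_le_card hAB
        omega
      obtain ⟨s, _, hs⟩ := discrete_ivt (fun s => (cutSet p.1 p.2 s).card)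
        (fun s => cutSet_card_step p.1 p.2 s) (n/2) n (by simpa [h0] using hA2)
        (by show n/2 ≤ (cutSet p.1 p.2 n).card; omega)
      exact ⟨s, hs⟩
    refine ⟨hex.choose, ?_, ?_⟩ <;> simp only [midcut, dif_pos hex]
    exact hex.choose_spec
  have hmem : ∀ p ∈ P, midcut n p ∈ Finset.powersetCard (n/2) (Finset.range n) := by
    intro p hp
    obtain ⟨s, he, hc⟩ := hmid p hp
    obtain ⟨hAB, hBr, _⟩ := hpair p hp
    exact Finset.mem_powersetCard.mpr ⟨he ▸ (cutSet_subset p.1 p.2 hAB s).trans hBr, hc⟩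
  have hinj : Set.InjOn (midcut n) ↑P := by
    intro p hp q hq he
    obtain ⟨s, hes, _⟩ := hmid p hp
    obtain ⟨s', hes', _⟩ := hmid q hq
    exact hpart p hp q hq s s' (by rw [← hes, he, hes'])
  have hsurj : Set.SurjOn (midcut n) ↑P ↑(Finset.powersetCard (n/2) (Finset.range n)) := by
    intro D hD
    obtain ⟨hDr, hDc⟩ := Finset.mem_powersetCard.mp (by simpa using hD)
    obtain ⟨p, hp, s, _, hDs⟩ := hcov D hDr
    obtain ⟨s', hes', hc'⟩ := hmid p hp
    refine ⟨p, hp, ?_⟩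
    have hsub : midcut n p ⊆ D ∨ D ⊆ midcut n p := by
      rw [hDs, hes']
      rcases le_total s' s with h | h
      · exact Or.inl (cutSet_mono _ _ h)
      · exact Or.inr (cutSet_mono _ _ h)
    rcases hsub with h | h
    · exact Finset.eq_of_subset_of_card_le h (by omega)
    · exact (Finset.eq_of_subset_of_card_le h (by omega)).symm
  have h1 : P.card ≤ (Finset.powersetCard (n/2) (Finset.range n)).card :=
    Finset.card_le_card_of_injOn (midcut n) hmem hinj
  have h2 : (Finset.powersetCard (n/2) (Finset.range n)).card ≤ P.card :=
    Finset.card_le_card_of_surjOn (midcut n) hsurj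
  have h3 : (Finset.powersetCard (n/2) (Finset.range n)).card = n.choose (n/2) := by
    rw [Finset.card_powersetCard, Finset.card_range]
  have h4 : n.choose ((n+1)/2) = n.choose (n/2) := by
    have : (n+1)/2 = n - n/2 := by omega
    rw [this, Nat.choose_symm (Nat.div_le_self n 2)]
  omega

end chains

section assembly
open Finset

/-- V0 is infinite for n ≥ 2. -/
lemma V0_infinite {n : ℕ} (hn : 2 ≤ n) : (V0 n).Infinite := by
  have h0 : (0:ℕ) < n := by omega
  refine Set.infinite_of_injective_forall_mem
    (f := fun c : ℝ => fun i : Fin n => if i = ⟨0, h0⟩ then c else 0) ?_ ?_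
  · intro c d hcd
    have := congrFun hcd ⟨0, h0⟩
    simpa using this
  · intro c i hi
    have : i ≠ ⟨0, h0⟩ := by
      intro he
      rw [he] at hi
      simp at hi
      omega
    simp [this]

lemma pad_set {n k : ℕ} (hn : 2 ≤ n) (S₀ : Finset (Fin n → ℝ)) (hsub : ↑S₀ ⊆ V0 n)
    (hcard : S₀.card ≤ k) : ∃ S : Finset (Fin n → ℝ), S₀ ⊆ S ∧ ↑S ⊆ V0 n ∧ S.card = k := by
  classical
  have hinf : (V0 n \ ↑S₀).Infinite := ((V0_infinite hn).diff (S₀.finite_toSet))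
  obtain ⟨T, hT, hTc⟩ := hinf.exists_subset_card_eq (k - S₀.card)
  refine ⟨S₀ ∪ T, Finset.subset_union_left, ?_, ?_⟩
  · intro x hx
    rcases Finset.mem_union.mp (by simpa using hx) with h | h
    · exact hsub h
    · exact (hT h).1
  · rw [Finset.card_union_of_disjoint, hTc]
    · omega
    · rw [Finset.disjoint_right]
      intro x hx
      exact fun hc => (hT hx).2 hc

/-- The upper bound: an illuminating set of the right cardinality. -/
lemma exists_illum_set (n : ℕ) (hn : 2 ≤ n) :
    ∃ S : Finset (Fin n → ℝ), ↑S ⊆ V0 n ∧ S.card = n.choose ((n+1)/2) ∧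
      ∀ z ∈ V0 n, vnorm n z = 1 → ∃ v ∈ S, illum n (vnorm n) v z := by
  classical
  have h0 : (0:ℕ) < n := by omega
  obtain ⟨P, hgood⟩ := goodFam_exists n
  obtain ⟨hpair, hcov, hpart⟩ := hgood
  have hPcard : P.card = n.choose ((n+1)/2) := goodFam_card ⟨hpair, hcov, hpart⟩
  set pn : Fin n := ⟨n-1, by omega⟩ with hpn
  set vraw : (Finset ℕ × Finset ℕ) → (Fin n → ℝ) := fun p i =>
    if (i:ℕ) ∈ p.1 then 0 else if (i:ℕ) ∈ p.2 then ((i:ℕ)+1 : ℝ) else (n+1 : ℝ) with hvraw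
  set vv : (Finset ℕ × Finset ℕ) → (Fin n → ℝ) := fun p i => vraw p i - vraw p pn with hvv
  have hV0 : ∀ p, vv p ∈ V0 n := by
    intro p i hi
    have : i = pn := Fin.ext (by rw [hi])
    rw [this]
    simp [hvv]
  -- the cut property
  have hcut : ∀ p ∈ P, ∀ s ≤ n, ∀ i j : Fin n, (i:ℕ) ∈ cutSet p.1 p.2 s →
      (j:ℕ) ∉ cutSet p.1 p.2 s → vv p i < vv p j := by
    intro p hp s hs i j hi hj
    have hi' : vraw p i ≤ s := by
      rcases Finset.mem_union.mp hi with h | h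
      · rw [hvraw]; simp only [if_pos h]; positivity
      · obtain ⟨h1, h2⟩ := Finset.mem_filter.mp h
        obtain ⟨hB, hA⟩ := Finset.mem_sdiff.mp h1
        rw [hvraw]; simp only [if_neg hA, if_pos hB]
        have : ((i:ℕ):ℝ) + 1 ≤ (s:ℝ) := by exact_mod_cast h2
        exact this
    have hj' : (s:ℝ) + 1 ≤ vraw p j := by
      have hjA : (j:ℕ) ∉ p.1 := fun hc => hj (Finset.mem_union_left _ hc)
      by_cases hjB : (j:ℕ) ∈ p.2
      · have : ¬ ((j:ℕ) < s) := fun hc =>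
          hj (Finset.mem_union_right _ (Finset.mem_filter.mpr
            ⟨Finset.mem_sdiff.mpr ⟨hjB, hjA⟩, hc⟩))
        rw [hvraw]; simp only [if_neg hjA, if_pos hjB]
        have : s ≤ (j:ℕ) := by omega
        have := (Nat.cast_le (α := ℝ)).mpr this
        linarith
      · rw [hvraw]; simp only [if_neg hjA, if_neg hjB]
        have := (Nat.cast_le (α := ℝ)).mpr hs
        linarith
    rw [hvv]
    simp only
    have : vraw p i < vraw p j := by linarith
    linarith
  have hsubV0 : ↑(P.image vv) ⊆ V0 n := by
    intro x hx
    rw [Finset.mem_coe] at hx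
    obtain ⟨p, _, rfl⟩ := Finset.mem_image.mp hx
    exact hV0 p
  have hilluminates : ∀ z ∈ V0 n, vnorm n z = 1 → ∃ v ∈ P.image vv, illum n (vnorm n) v z := by
    intro z hz hz1
    set D : Finset ℕ := (Finset.univ.filter (fun i : Fin n => z i = ⨆ k, z k)).image Fin.val
      with hD
    have hDr : D ⊆ Finset.range n := by
      intro x hx
      obtain ⟨i, _, rfl⟩ := Finset.mem_image.mp hx
      exact Finset.mem_range.mpr i.isLt
    obtain ⟨p, hp, s, hs, hDs⟩ := hcov D hDr
    refine ⟨vv p, Finset.mem_image_of_mem vv hp, ?_⟩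
    apply illum_suff h0 hz1
    intro i j hi hj
    have hiD : (i:ℕ) ∈ cutSet p.1 p.2 s := by
      rw [← hDs, hD, Finset.mem_image]
      exact ⟨i, Finset.mem_filter.mpr ⟨Finset.mem_univ _, hi⟩, rfl⟩
    have hjD : (j:ℕ) ∉ cutSet p.1 p.2 s := by
      rw [← hDs, hD, Finset.mem_image]
      rintro ⟨i', hi', he⟩
      have hij : i' = j := Fin.ext he
      rw [Finset.mem_filter, hij] at hi'
      have hzz : (⨆ k, z k) - (⨅ k, z k) = 1 := hz1
      rw [← hi'.2, ← hj] at hzz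
      simp at hzz
    exact hcut p hp s hs i j hiD hjD
  obtain ⟨S, hS₀S, hSV0, hScard⟩ := pad_set hn (P.image vv) hsubV0
    (le_trans Finset.card_image_le (le_of_eq hPcard))
  refine ⟨S, hSV0, hScard, ?_⟩
  intro z hz hz1
  obtain ⟨v, hv, hvi⟩ := hilluminates z hz hz1
  exact ⟨v, hS₀S hv, hvi⟩

end assembly

section lower
open Finset

lemma lower_bound (n : ℕ) (hn : 2 ≤ n) (S : Finset (Fin n → ℝ)) (hsub : ↑S ⊆ V0 n)
    (hillum : ∀ z ∈ V0 n, vnorm n z = 1 → ∃ v ∈ S, illum n (vnorm n) v z) :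
    n.choose ((n+1)/2) ≤ S.card := by
  classical
  have h0 : (0:ℕ) < n := by omega
  haveI : Nonempty (Fin n) := ⟨⟨0, h0⟩⟩
  set m := (n+1)/2 with hm
  set pn : Fin n := ⟨n-1, by omega⟩ with hpn
  set zf : Finset (Fin n) → (Fin n → ℝ) := fun A i =>
    (if i ∈ A then (0:ℝ) else -1) + (if pn ∈ A then 0 else 1) with hzf
  have hval_in : ∀ A : Finset (Fin n), ∀ i ∈ A, zf A i = (if pn ∈ A then (0:ℝ) else 1) := by
    intro A i hi
    rw [hzf]; simp only [if_pos hi]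
    by_cases h : pn ∈ A <;> simp [h]
  have hval_out : ∀ A : Finset (Fin n), ∀ i, i ∉ A → zf A i = (if pn ∈ A then (0:ℝ) else 1) - 1 := by
    intro A i hi
    rw [hzf]; simp only [if_neg hi]
    by_cases h : pn ∈ A <;> simp [h] <;> ring
  have hsup : ∀ A : Finset (Fin n), A.Nonempty → (⨆ i, zf A i) = (if pn ∈ A then (0:ℝ) else 1) := by
    intro A ⟨i0, hi0⟩
    apply le_antisymm
    · apply ciSup_le
      intro i
      by_cases h : i ∈ A
      · rw [hval_in A i h]
      · rw [hval_out A i h]; linarith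
    · have := le_ciSup (Set.finite_range (zf A)).bddAbove i0
      rw [hval_in A i0 hi0] at this
      exact this
  have hinf : ∀ A : Finset (Fin n), (∃ j, j ∉ A) →
      (⨅ i, zf A i) = (if pn ∈ A then (0:ℝ) else 1) - 1 := by
    intro A ⟨j0, hj0⟩
    apply le_antisymm
    · have := ciInf_le (Set.finite_range (zf A)).bddBelow j0
      rw [hval_out A j0 hj0] at this
      exact this
    · apply le_ciInf
      intro i
      by_cases h : i ∈ A
      · rw [hval_in A i h]; linarith
      · rw [hval_out A i h]
  have hmemV0 : ∀ A : Finset (Fin n), zf A ∈ V0 n := by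
    intro A i hi
    have hie : i = pn := Fin.ext (by rw [hi])
    rw [hie, hzf]
    by_cases h : pn ∈ A <;> simp [h]
  have hnorm1 : ∀ A : Finset (Fin n), A.Nonempty → (∃ j, j ∉ A) → vnorm n (zf A) = 1 := by
    intro A h1 h2
    rw [vnorm_def, hsup A h1, hinf A h2]
    ring
  set g : Finset (Fin n) → (Fin n → ℝ) := fun A =>
    if h : ∃ v ∈ S, illum n (vnorm n) v (zf A) then h.choose else 0 with hg
  set F := Finset.powersetCard m (Finset.univ : Finset (Fin n)) with hF
  have hprops : ∀ A ∈ F, A.Nonempty ∧ (∃ j, j ∉ A) := by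
    intro A hA
    obtain ⟨_, hcard⟩ := Finset.mem_powersetCard.mp hA
    constructor
    · apply Finset.card_pos.mp; omega
    · by_contra hc
      push_neg at hc
      have : A = Finset.univ := Finset.eq_univ_iff_forall.mpr hc
      rw [this, Finset.card_univ, Fintype.card_fin] at hcard
      omega
  have hgS : ∀ A ∈ F, g A ∈ S ∧ ∀ i ∈ A, ∀ j ∉ A, g A i < g A j := by
    intro A hA
    obtain ⟨h1, h2⟩ := hprops A hA
    have hex : ∃ v ∈ S, illum n (vnorm n) v (zf A) :=
      hillum (zf A) (hmemV0 A) (hnorm1 A h1 h2)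
    have hgA : g A = hex.choose := by rw [hg]; simp only [dif_pos hex]
    obtain ⟨hS', hil⟩ := hex.choose_spec
    rw [hgA]
    refine ⟨hS', ?_⟩
    intro i hi j hj
    apply illum_necc h0 (hnorm1 A h1 h2) hil
    · rw [hval_in A i hi, hsup A h1]
    · rw [hval_out A j hj, hinf A h2]
  have hinj : Set.InjOn g ↑F := by
    intro A hA B hB he
    by_contra hne
    have hcA := (Finset.mem_powersetCard.mp (Finset.mem_coe.mp hA)).2
    have hcB := (Finset.mem_powersetCard.mp (Finset.mem_coe.mp hB)).2
    have hABne : (A \ B).Nonempty := by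
      rw [Finset.sdiff_nonempty]
      intro hsubAB
      exact hne (Finset.eq_of_subset_of_card_le hsubAB (by omega))
    have hBAne : (B \ A).Nonempty := by
      rw [Finset.sdiff_nonempty]
      intro hsubBA
      exact hne (Finset.eq_of_subset_of_card_le hsubBA (by omega)).symm
    obtain ⟨i, hiAB⟩ := hABne
    obtain ⟨j, hjBA⟩ := hBAne
    obtain ⟨hiA, hiB⟩ := Finset.mem_sdiff.mp hiAB
    obtain ⟨hjB, hjA⟩ := Finset.mem_sdiff.mp hjBA
    have l1 : g A i < g A j := (hgS A (Finset.mem_coe.mp hA)).2 i hiA j hjA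
    have l2 : g B j < g B i := (hgS B (Finset.mem_coe.mp hB)).2 j hjB i hiB
    rw [he] at l1
    linarith
  have hle : F.card ≤ S.card :=
    Finset.card_le_card_of_injOn g (fun A hA => (hgS A hA).1) hinj
  have hFc : F.card = n.choose m := by
    rw [hF, Finset.card_powersetCard, Finset.card_univ, Fintype.card_fin]
  omega

end lower

/-- The illumination number of the unit ball of the variation norm on
`V0 = {x ∈ ℝⁿ : x_n = 0}` is exactly `C(n, ⌈n/2⌉)`. -/
theorem stmt2 (n : ℕ) (hn : 2 ≤ n) :
    IsLeast {k : ℕ | ∃ S : Finset (Fin n → ℝ), ↑S ⊆ V0 n ∧ S.card = k ∧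
        ∀ z ∈ V0 n, vnorm n z = 1 → ∃ v ∈ S, illum n (vnorm n) v z}
      (Nat.choose n ((n + 1) / 2)) := by
  constructor
  · obtain ⟨S, h1, h2, h3⟩ := exists_illum_set n hn
    exact ⟨S, h1, h2, h3⟩
  · rintro k ⟨S, h1, h2, h3⟩
    rw [← h2]
    exact lower_bound n hn S h1 h3
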